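/- Let V be real-valued and integrable on [0,x] for every x < ∞, and let z ∈ ℂ with Im z ≠ 0. Then the Dirichlet solution satisfies u(x,z) ≠ 0 for every x > 0. -/

import Mathlib

open MeasureTheory Set

/-- interval integral commutes with conj -/
lemma my_intervalIntegral_conj (F : ℝ → ℂ) (a b : ℝ) :
    (starRingEnd ℂ) (∫ t in a..b, F t) = ∫ t in a..b, (starRingEnd ℂ) (F t) := by
  simp only [intervalIntegral, map_sub, integral_conj]

/-- interval integral commutes with im -/
lemma my_intervalIntegral_im {F : ℝ → ℂ} {a b : ℝ} (h : IntervalIntegrable F volume a b) :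
    (∫ t in a..b, F t).im = ∫ t in a..b, (F t).im := by
  have h1 := integral_im (𝕜 := ℂ) h.1
  have h2 := integral_im (𝕜 := ℂ) h.2
  simp only [RCLike.im_to_complex] at h1 h2
  simp only [intervalIntegral, Complex.sub_im, ← h1, ← h2]

/-- Fubini on the triangle 0 ≤ t ≤ s ≤ b. -/
lemma my_fubini_triangle {b : ℝ} (hb : 0 ≤ b) {h f : ℝ → ℂ}
    (hh : ContinuousOn h (Icc 0 b)) (hf : IntegrableOn f (Icc 0 b)) :
    ∫ s in (0:ℝ)..b, (∫ t in (0:ℝ)..s, h t) * f s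
      = ∫ t in (0:ℝ)..b, h t * ∫ s in t..b, f s := by
  set μ := volume.restrict (Ioc 0 b) with hμ
  set A : Set (ℝ × ℝ) := {p | p.2 ∈ Ioc 0 p.1} with hA
  set G : ℝ × ℝ → ℂ := fun p => h p.2 * f p.1 with hG
  have hAm : MeasurableSet A :=
    (measurableSet_lt measurable_const measurable_snd).inter
      (measurableSet_le measurable_snd measurable_fst)
  have hfμ : Integrable f μ := hf.mono_set Ioc_subset_Icc_self
  have hhμ : Integrable h μ := (hh.integrableOn_compact isCompact_Icc).mono_set Ioc_subset_Icc_self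
  have hGi : Integrable (A.indicator G) (μ.prod μ) := by
    refine Integrable.indicator ?_ hAm
    have := hfμ.mul_prod hhμ
    simpa [hG, mul_comm] using this
  have swap := integral_integral_swap (f := fun s t => A.indicator G (s, t))
    (μ := μ) (ν := μ) (by exact hGi)
  calc ∫ s in (0:ℝ)..b, (∫ t in (0:ℝ)..s, h t) * f s
      = ∫ s, (∫ t, A.indicator G (s, t) ∂μ) ∂μ := by
        rw [intervalIntegral.integral_of_le hb, hμ]
        refine setIntegral_congr_fun measurableSet_Ioc (fun s hs => ?_)
        have h1 : ∀ t : ℝ, A.indicator G (s, t) = (Ioc 0 s).indicator (fun t => h t * f s) t := by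
          intro t
          by_cases ht : t ∈ Ioc 0 s
          · rw [Set.indicator_of_mem ht, Set.indicator_of_mem (by exact ht)]
          · rw [Set.indicator_of_notMem ht, Set.indicator_of_notMem (by exact ht)]
        simp only [h1]
        rw [setIntegral_indicator measurableSet_Ioc,
          Set.inter_eq_right.mpr (Ioc_subset_Ioc le_rfl hs.2),
          integral_mul_const, intervalIntegral.integral_of_le hs.1.le]
    _ = ∫ t, (∫ s, A.indicator G (s, t) ∂μ) ∂μ := swap
    _ = ∫ t in (0:ℝ)..b, h t * ∫ s in t..b, f s := by
        rw [intervalIntegral.integral_of_le hb, hμ]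
        refine (setIntegral_congr_fun measurableSet_Ioc (fun t ht => ?_)).symm
        have h1 : ∀ s : ℝ, A.indicator G (s, t) = (Ici t).indicator (fun s => h t * f s) s := by
          intro s
          by_cases hs : t ≤ s
          · rw [Set.indicator_of_mem (by exact ⟨ht.1, hs⟩ : (s,t) ∈ A),
              Set.indicator_of_mem (by exact hs)]
          · rw [Set.indicator_of_notMem (fun hc => hs hc.2),
              Set.indicator_of_notMem (by exact hs)]
        simp only [h1]
        rw [setIntegral_indicator measurableSet_Ici]
        have : Ioc 0 b ∩ Ici t = Icc t b := by
          ext s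
          simp only [mem_inter_iff, mem_Ioc, mem_Ici, mem_Icc]
          constructor
          · rintro ⟨⟨_, h2⟩, h3⟩; exact ⟨h3, h2⟩
          · rintro ⟨h3, h2⟩; exact ⟨⟨lt_of_lt_of_le ht.1 h3, h2⟩, h3⟩
        rw [this, integral_Icc_eq_integral_Ioc, integral_const_mul,
          intervalIntegral.integral_of_le ht.2]

/-- `u` is the Dirichlet solution for potential `V` at energy `z`: `u ∈ W^{2,1}_loc([0,∞))`,
`-u'' + V u = z u` a.e. (encoded in integrated form), `u(0) = 0`, `u'(0) = 1`. -/
def IsDirichlet (V : ℝ → ℝ) (z : ℂ) (u u' : ℝ → ℂ) : Prop :=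
  u 0 = 0 ∧ u' 0 = 1 ∧
  (∀ x, 0 ≤ x → HasDerivWithinAt u (u' x) (Set.Ici 0) x) ∧
  (∀ x, 0 ≤ x → u' x = 1 + ∫ t in (0:ℝ)..x, ((V t : ℂ) - z) * u t)

/-- for `Im z ≠ 0` the Dirichlet solution has no zeros in `(0,∞)`. -/
theorem dirichlet_solution_nonvanishing (V : ℝ → ℝ)
    (hVloc : ∀ x : ℝ, MeasureTheory.IntegrableOn V (Set.Icc 0 x))
    (z : ℂ) (hz : z.im ≠ 0)
    (u u' : ℝ → ℂ) (hu : IsDirichlet V z u u') :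
    ∀ x : ℝ, 0 < x → u x ≠ 0 := by
  obtain ⟨hu0, hu'0, hderiv, hode⟩ := hu
  intro x hx hux
  have hx0 : (0:ℝ) ≤ x := hx.le
  have hucont : ContinuousOn u (Ici 0) := fun t ht => (hderiv t ht).continuousWithinAt
  set f : ℝ → ℂ := fun t => ((V t : ℂ) - z) * u t with hfdef
  set g : ℝ → ℂ := fun s => ∫ t in (0:ℝ)..s, f t with hgdef
  have hfg : ∀ s, 0 ≤ s → u' s = 1 + g s := fun s hs => hode s hs
  -- integrability of f
  have hfint : ∀ b : ℝ, IntegrableOn f (Icc 0 b) := by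
    intro b
    have huc : ContinuousOn u (Icc 0 b) := hucont.mono Icc_subset_Ici_self
    have h1 : IntegrableOn (fun t => (V t : ℂ) - z) (Icc 0 b) :=
      ((hVloc b).ofReal).sub (integrableOn_const measure_Icc_lt_top.ne)
    exact h1.mul_continuousOn huc isCompact_Icc
  have hfii : ∀ b, 0 ≤ b → IntervalIntegrable f volume 0 b := fun b hb =>
    (intervalIntegrable_iff_integrableOn_Ioc_of_le hb).mpr
      ((hfint b).mono_set Ioc_subset_Icc_self)
  -- continuity of g and u' on [0,x]
  have hgc : ContinuousOn g (Icc 0 x) := by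
    have h2 : IntegrableOn f (uIcc 0 x) := by rw [uIcc_of_le hx0]; exact hfint x
    have := intervalIntegral.continuousOn_primitive_interval (a := 0) (b := x) h2
    rwa [uIcc_of_le hx0] at this
  have hu'c : ContinuousOn u' (Icc 0 x) :=
    (continuousOn_const.add hgc).congr (fun s hs => hfg s hs.1)
  have hcu'c : ContinuousOn (fun t => (starRingEnd ℂ) (u' t)) (Icc 0 x) :=
    continuous_star.comp_continuousOn hu'c
  have hucx : ContinuousOn u (Icc 0 x) := hucont.mono Icc_subset_Ici_self
  -- FTC for u
  have hftc : ∀ s ∈ Icc (0:ℝ) x, u s = ∫ t in (0:ℝ)..s, u' t := by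
    intro s hs
    have hint : IntervalIntegrable u' volume 0 s := by
      apply ContinuousOn.intervalIntegrable
      rw [uIcc_of_le hs.1]
      exact hu'c.mono (Icc_subset_Icc le_rfl hs.2)
    have := intervalIntegral.integral_eq_sub_of_hasDeriv_right_of_le hs.1
      (hucont.mono Icc_subset_Ici_self)
      (fun t ht => (hderiv t ht.1.le).mono (fun y hy => (ht.1.trans hy).le))
      hint
    rw [this, hu0, sub_zero]
  have hconj : ∀ s ∈ Icc (0:ℝ) x, (starRingEnd ℂ) (u s)
      = ∫ t in (0:ℝ)..s, (starRingEnd ℂ) (u' t) := by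
    intro s hs; rw [hftc s hs, my_intervalIntegral_conj]
  -- interval integrabilities
  have hcu'u' : IntervalIntegrable (fun s => (starRingEnd ℂ) (u' s) * u' s) volume 0 x := by
    apply ContinuousOn.intervalIntegrable; rw [uIcc_of_le hx0]; exact hcu'c.mul hu'c
  have hcuf : IntervalIntegrable (fun s => (starRingEnd ℂ) (u s) * f s) volume 0 x := by
    rw [intervalIntegrable_iff_integrableOn_Ioc_of_le hx0]
    refine IntegrableOn.mono_set ?_ Ioc_subset_Icc_self
    exact IntegrableOn.continuousOn_mul (continuous_star.comp_continuousOn hucx) (hfint x)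
      isCompact_Icc
  have hcu'g : IntervalIntegrable (fun s => (starRingEnd ℂ) (u' s) * g s) volume 0 x := by
    apply ContinuousOn.intervalIntegrable; rw [uIcc_of_le hx0]; exact hcu'c.mul hgc
  have hcu'1 : IntervalIntegrable (fun s => (starRingEnd ℂ) (u' s) * 1) volume 0 x := by
    apply ContinuousOn.intervalIntegrable; rw [uIcc_of_le hx0]; exact hcu'c.mul continuousOn_const
  have hcu'gx : IntervalIntegrable (fun s => (starRingEnd ℂ) (u' s) * g x) volume 0 x := by
    apply ContinuousOn.intervalIntegrable; rw [uIcc_of_le hx0]; exact hcu'c.mul continuousOn_const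
  have hxmem : x ∈ Icc (0:ℝ) x := ⟨hx0, le_rfl⟩
  -- term 1
  have hT1 : ∫ s in (0:ℝ)..x, (starRingEnd ℂ) (u' s) * u' s
      = (starRingEnd ℂ) (u x) + ∫ s in (0:ℝ)..x, (starRingEnd ℂ) (u' s) * g s := by
    have e1 : EqOn (fun s => (starRingEnd ℂ) (u' s) * u' s)
        (fun s => (starRingEnd ℂ) (u' s) * 1 + (starRingEnd ℂ) (u' s) * g s) (uIcc 0 x) := by
      intro s hs
      rw [uIcc_of_le hx0] at hs
      simp only [← mul_add, ← hfg s hs.1]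
    rw [intervalIntegral.integral_congr e1, intervalIntegral.integral_add hcu'1 hcu'g]
    congr 1
    simp only [mul_one]
    exact (hconj x hxmem).symm
  -- term 2
  have hT2 : ∫ s in (0:ℝ)..x, (starRingEnd ℂ) (u s) * f s
      = (starRingEnd ℂ) (u x) * g x - ∫ s in (0:ℝ)..x, (starRingEnd ℂ) (u' s) * g s := by
    have e2 : EqOn (fun s => (starRingEnd ℂ) (u s) * f s)
        (fun s => (∫ t in (0:ℝ)..s, (starRingEnd ℂ) (u' t)) * f s) (uIcc 0 x) := by
      intro s hs
      rw [uIcc_of_le hx0] at hs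
      simp only [hconj s hs]
    rw [intervalIntegral.integral_congr e2, my_fubini_triangle hx0 hcu'c (hfint x)]
    have e3 : EqOn (fun t => (starRingEnd ℂ) (u' t) * ∫ s in t..x, f s)
        (fun t => (starRingEnd ℂ) (u' t) * g x - (starRingEnd ℂ) (u' t) * g t) (uIcc 0 x) := by
      intro t ht
      rw [uIcc_of_le hx0] at ht
      simp only [← mul_sub]
      congr 1
      exact (intervalIntegral.integral_interval_sub_left (hfii x hx0) (hfii t ht.1)).symm
    rw [intervalIntegral.integral_congr e3, intervalIntegral.integral_sub hcu'gx hcu'g,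
      intervalIntegral.integral_mul_const, ← hconj x hxmem]
  -- the key identity
  have key : (starRingEnd ℂ) (u x) * u' x
      = ∫ s in (0:ℝ)..x, ((starRingEnd ℂ) (u' s) * u' s + (starRingEnd ℂ) (u s) * f s) := by
    rw [intervalIntegral.integral_add hcu'u' hcuf, hT1, hT2, hfg x hx0]
    ring
  -- imaginary parts
  have hIm : ((starRingEnd ℂ) (u x) * u' x).im
      = -z.im * ∫ s in (0:ℝ)..x, Complex.normSq (u s) := by
    rw [key, my_intervalIntegral_im (hcu'u'.add hcuf)]
    have e4 : EqOn (fun s => ((starRingEnd ℂ) (u' s) * u' s + (starRingEnd ℂ) (u s) * f s).im)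
        (fun s => -z.im * Complex.normSq (u s)) (uIcc 0 x) := by
      intro s _
      have h1 : (starRingEnd ℂ) (u' s) * u' s = (Complex.normSq (u' s) : ℂ) :=
        (Complex.normSq_eq_conj_mul_self).symm
      have h2 : (starRingEnd ℂ) (u s) * f s = ((V s : ℂ) - z) * (Complex.normSq (u s) : ℂ) := by
        simp only [hfdef]
        rw [Complex.normSq_eq_conj_mul_self]
        ring
      simp only [h1, h2, Complex.add_im, Complex.ofReal_im, Complex.mul_im, Complex.sub_im,
        Complex.sub_re, Complex.ofReal_re, Complex.ofReal_im, zero_add]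
      ring
    rw [intervalIntegral.integral_congr e4, intervalIntegral.integral_const_mul]
  -- vanishing of the integral
  have hI0 : ∫ s in (0:ℝ)..x, Complex.normSq (u s) = 0 := by
    have h0 : ((starRingEnd ℂ) (u x) * u' x).im = 0 := by rw [hux]; simp
    rw [h0] at hIm
    rcases mul_eq_zero.mp hIm.symm with h | h
    · exact absurd (neg_eq_zero.mp h) hz
    · exact h
  -- find a point where u ≠ 0
  have hIcid : Ici (0:ℝ) \ {0} = Ioi 0 := by
    ext t
    simp only [mem_diff, mem_Ici, mem_singleton_iff, mem_Ioi]
    constructor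
    · rintro ⟨h1, h2⟩; exact lt_of_le_of_ne h1 (Ne.symm h2)
    · intro h1; exact ⟨h1.le, h1.ne'⟩
  have hslope : ∃ t₀ ∈ Ioo (0:ℝ) x, u t₀ ≠ 0 := by
    have hd := hderiv 0 le_rfl
    rw [hasDerivWithinAt_iff_tendsto_slope] at hd
    have hne : ∀ᶠ t in nhdsWithin 0 (Ici 0 \ {0}), slope u 0 t ≠ 0 := by
      have hmem : {w : ℂ | w ≠ 0} ∈ nhds (u' 0) := by
        rw [hu'0]
        exact isOpen_compl_singleton.mem_nhds one_ne_zero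
      exact hd hmem
    have hmem2 : Ioo (0:ℝ) x ∈ nhdsWithin 0 (Ici 0 \ {0}) := by
      rw [hIcid]; exact Ioo_mem_nhdsGT_of_mem ⟨le_rfl, hx⟩
    have hnb : (nhdsWithin (0:ℝ) (Ici 0 \ {0})).NeBot := by
      rw [hIcid]; exact nhdsGT_neBot 0
    obtain ⟨t₀, h1, h2⟩ := (hne.and hmem2).exists
    refine ⟨t₀, h2, fun hc0 => h1 ?_⟩
    simp [slope, hc0, hu0]
  obtain ⟨t₀, ht₀, hut₀⟩ := hslope
  have hca : ContinuousAt u t₀ :=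
    ((hderiv t₀ ht₀.1.le).hasDerivAt (Ici_mem_nhds ht₀.1)).continuousAt
  obtain ⟨Uo, hUsub, hUo, hUmem⟩ := mem_nhds_iff.mp
    (hca.preimage_mem_nhds (isOpen_compl_singleton.mem_nhds (by exact hut₀)))
  have hnsqii : IntervalIntegrable (fun s => Complex.normSq (u s)) volume 0 x := by
    apply ContinuousOn.intervalIntegrable
    rw [uIcc_of_le hx0]
    exact Complex.continuous_normSq.comp_continuousOn hucx
  have hpos : 0 < ∫ s in (0:ℝ)..x, Complex.normSq (u s) := by
    rw [intervalIntegral.integral_pos_iff_support_of_nonneg_ae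
      (Filter.Eventually.of_forall (fun s => Complex.normSq_nonneg _)) hnsqii]
    refine ⟨hx, ?_⟩
    have hsub : Uo ∩ Ioo 0 x ⊆ Function.support (fun s => Complex.normSq (u s)) ∩ Ioc 0 x := by
      rintro s ⟨hs1, hs2⟩
      refine ⟨?_, hs2.1, hs2.2.le⟩
      have hne : u s ≠ 0 := hUsub hs1
      simpa [Function.mem_support, Complex.normSq_eq_zero] using hne
    calc (0:ENNReal) < volume (Uo ∩ Ioo 0 x) :=
          IsOpen.measure_pos volume (hUo.inter isOpen_Ioo) ⟨t₀, hUmem, ht₀⟩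
      _ ≤ _ := measure_mono hsub
  rw [hI0] at hpos
  exact lt_irrefl 0 hpos
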